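/- arXiv:1812.08399 — 3 statements merged into one kernel-verified Lean document; each statement's English description precedes it below -/
import Mathlib

section
/- Let P be a stochastic strongly connected N×N matrix, A = (A_1, ..., A_N) an irreducible N-tuple of d×d real matrices, and ‖·‖_B a Barabanov norm for A. If ρ(A_{i_k} ⋯ A_{i_1})^{1/k} = ρ_d(A) for every P-cycle (i_1, ..., i_k), then ‖A_{i_k} ⋯ A_{i_1}‖_B^{1/k} = ρ_d(A) for every P-word (i_1, ..., i_k). -/
open scoped BigOperators

noncomputable section
namespace JSRpaper

attribute [local instance] Matrix.linftyOpNormedRing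

/-- Spectral radius of a real matrix: maximum modulus of its complex eigenvalues. -/
def specRad {n : Type*} [Fintype n] [DecidableEq n] (M : Matrix n n ℝ) : ℝ :=
  ⨆ μ ∈ spectrum ℂ (M.map (algebraMap ℝ ℂ)), ‖μ‖

/-- Product `A_{i_n} ⋯ A_{i_1}` along the word `w = (i_1, …, i_n)`. -/
def prodW {d : ℕ} {ι : Type*} {n : ℕ} (A : ι → Matrix (Fin d) (Fin d) ℝ)
    (w : Fin n → ι) : Matrix (Fin d) (Fin d) ℝ :=
  ((List.ofFn w).map A).reverse.prod

/-- Deterministic joint spectral radius. -/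
def jsr {d : ℕ} {ι : Type*} [Fintype ι] (A : ι → Matrix (Fin d) (Fin d) ℝ) : ℝ :=
  ⨅ n : ℕ, ⨆ w : Fin (n + 1) → ι, ‖prodW A w‖ ^ (((n : ℝ) + 1)⁻¹)

def IsStochastic {ι : Type*} [Fintype ι] (P : Matrix ι ι ℝ) : Prop :=
  (∀ i j, 0 ≤ P i j) ∧ ∀ i, ∑ j, P i j = 1

def IsInvProb {ι : Type*} [Fintype ι] (ν : ι → ℝ) (P : Matrix ι ι ℝ) : Prop :=
  (∀ i, 0 ≤ ν i) ∧ (∑ i, ν i = 1) ∧ ∀ j, ∑ i, ν i * P i j = ν j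

/-- Markov weight `ν_{i_1} p_{i_1 i_2} ⋯ p_{i_n i_{n+1}}` of the word `w = (i_1, …, i_{n+1})`. -/
def chainWt {ι : Type*} [Fintype ι] (ν : ι → ℝ) (P : Matrix ι ι ℝ) {n : ℕ}
    (w : Fin (n + 1) → ι) : ℝ :=
  ν (w 0) * ∏ t : Fin n, P (w t.castSucc) (w t.succ)

/-- Probabilistic joint spectral radius associated with the Markov chain `(ν, P)`. -/
def rhoP {d : ℕ} {ι : Type*} [Fintype ι] [DecidableEq ι] (ν : ι → ℝ) (P : Matrix ι ι ℝ)
    (A : ι → Matrix (Fin d) (Fin d) ℝ) : ℝ :=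
  Filter.atTop.limsup fun n : ℕ =>
    ∑ w : Fin (n + 1) → ι, chainWt ν P w * ‖prodW A w‖ ^ (((n : ℝ) + 1)⁻¹)

/-- `ρ_p(P, A)`: supremum over invariant probabilities of `P`. -/
def rhoPP {d : ℕ} {ι : Type*} [Fintype ι] [DecidableEq ι] (P : Matrix ι ι ℝ)
    (A : ι → Matrix (Fin d) (Fin d) ℝ) : ℝ :=
  sSup {r | ∃ ν, IsInvProb ν P ∧ r = rhoP ν P A}

/-- `ρ_p(A)`: supremum over all pairs `(ν, P)`. -/
def rhoPsup {d : ℕ} {ι : Type*} [Fintype ι] [DecidableEq ι]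
    (A : ι → Matrix (Fin d) (Fin d) ℝ) : ℝ :=
  sSup {r | ∃ ν P, IsStochastic P ∧ IsInvProb ν P ∧ r = rhoP ν P A}

/-- `(i_1, …, i_{k+1})` is a `P`-word. -/
def IsPWord {ι : Type*} (P : Matrix ι ι ℝ) {k : ℕ} (w : Fin (k + 1) → ι) : Prop :=
  ∀ t : Fin k, 0 < P (w t.castSucc) (w t.succ)

/-- `(i_1, …, i_{k+1})` is a `P`-cycle. -/
def IsPCycle {ι : Type*} (P : Matrix ι ι ℝ) {k : ℕ} (w : Fin (k + 1) → ι) : Prop :=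
  IsPWord P w ∧ 0 < P (w (Fin.last k)) (w 0)

/-- `(i_1, …, i_{k+1})` is a `(ν, P)`-cycle. -/
def IsNuPCycle {ι : Type*} (ν : ι → ℝ) (P : Matrix ι ι ℝ) {k : ℕ}
    (w : Fin (k + 1) → ι) : Prop :=
  IsPCycle P w ∧ 0 < ν (w 0)

/-- `P` is strongly connected: its directed graph (positive entries) is strongly connected. -/
def StronglyConnected {ι : Type*} (P : Matrix ι ι ℝ) : Prop :=
  ∀ i j : ι, ∃ (k : ℕ) (w : Fin (k + 1) → ι), w 0 = i ∧ w (Fin.last k) = j ∧ IsPWord P w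

/-- The `N`-tuple `A` is irreducible. -/
def IrredTuple {d : ℕ} {ι : Type*} (A : ι → Matrix (Fin d) (Fin d) ℝ) : Prop :=
  ∀ V : Submodule ℝ (Fin d → ℝ), (∀ i, ∀ x ∈ V, (A i).mulVec x ∈ V) → V = ⊥ ∨ V = ⊤

/-- `nB` is a Barabanov norm for `A`. -/
structure IsBarabanovNorm {d : ℕ} {ι : Type*} [Fintype ι]
    (A : ι → Matrix (Fin d) (Fin d) ℝ) (nB : (Fin d → ℝ) → ℝ) : Prop where
  nonneg : ∀ x, 0 ≤ nB x
  eq_zero_iff : ∀ x, nB x = 0 ↔ x = 0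
  add_le : ∀ x y, nB (x + y) ≤ nB x + nB y
  smul : ∀ (c : ℝ) (x), nB (c • x) = |c| * nB x
  extremal : ∀ i x, nB ((A i).mulVec x) ≤ jsr A * nB x
  attain : ∀ (x : Fin d → ℝ) (k : ℕ), ∃ σ : ℕ → ι,
    nB ((prodW A fun t : Fin k => σ (t.1 + 1)).mulVec x) = jsr A ^ k * nB x

/-- Matrix norm induced by the vector norm `nB`. -/
def indNorm {d : ℕ} (nB : (Fin d → ℝ) → ℝ) (M : Matrix (Fin d) (Fin d) ℝ) : ℝ :=
  sSup {r | ∃ x, nB x = 1 ∧ r = nB (M.mulVec x)}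

/-- Stochastic tensor of order `m + 2` (a Markov chain of order `m + 1`). -/
def IsStochasticTensor {N m : ℕ} (P : (Fin (m + 1) → Fin N) → Fin N → ℝ) : Prop :=
  (∀ u j, 0 ≤ P u j) ∧ ∀ u, ∑ j, P u j = 1

/-- Shift-invariant probability tensor for the order-`m + 1` chain `P`. -/
def IsInvProbTensor {N m : ℕ} (ν : (Fin (m + 1) → Fin N) → ℝ)
    (P : (Fin (m + 1) → Fin N) → Fin N → ℝ) : Prop :=
  (∀ u, 0 ≤ ν u) ∧ (∑ u, ν u = 1) ∧
    ∀ u : Fin (m + 1) → Fin N,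
      ∑ i : Fin N, ν (Fin.cons i (Fin.init u)) *
        P (Fin.cons i (Fin.init u)) (u (Fin.last m)) = ν u

/-- Probabilistic joint spectral radius for a Markov chain of order `m + 1`. -/
def rhoPTensor {d N m : ℕ} (ν : (Fin (m + 1) → Fin N) → ℝ)
    (P : (Fin (m + 1) → Fin N) → Fin N → ℝ)
    (A : Fin N → Matrix (Fin d) (Fin d) ℝ) : ℝ :=
  Filter.atTop.limsup fun n : ℕ =>
    ∑ w : Fin (n + m + 2) → Fin N,
      (ν (fun j : Fin (m + 1) => w ⟨j.1, by omega⟩) *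
        ∏ t : Fin (n + 1),
          P (fun j : Fin (m + 1) => w ⟨t.1 + j.1, by omega⟩) (w ⟨t.1 + m + 1, by omega⟩)) *
      ‖prodW A w‖ ^ (((n : ℝ) + m + 2)⁻¹)

/-- `ρ_p(m, A)`: supremum over all order-`m + 1` Markov chains. -/
def rhoPTensorSup {d N : ℕ} (m : ℕ) (A : Fin N → Matrix (Fin d) (Fin d) ℝ) : ℝ :=
  sSup {r | ∃ ν P, IsStochasticTensor P ∧ IsInvProbTensor ν P ∧ r = rhoPTensor (m := m) ν P A}


section Aux

variable {d N : ℕ} {A : Fin N → Matrix (Fin d) (Fin d) ℝ}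
  {nB : (Fin d → ℝ) → ℝ} (hB : IsBarabanovNorm A nB)
include hB

lemma nB_zero : nB 0 = 0 := by
  have h := hB.smul 0 0
  simpa using h

omit hB in
lemma jsr_nonneg (A : Fin N → Matrix (Fin d) (Fin d) ℝ) : 0 ≤ jsr A :=
  Real.iInf_nonneg fun _ => Real.iSup_nonneg fun _ => Real.rpow_nonneg (norm_nonneg _) _

lemma nB_sum_le {α : Type*} (s : Finset α) (f : α → Fin d → ℝ) :
    nB (∑ i ∈ s, f i) ≤ ∑ i ∈ s, nB (f i) := by
  classical
  induction s using Finset.induction with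
  | empty => simp [nB_zero hB]
  | insert a s h ih =>
      rw [Finset.sum_insert h, Finset.sum_insert h]
      exact le_trans (hB.add_le _ _) (by linarith)

lemma nB_le_K : ∃ K : ℝ, 0 < K ∧ ∀ x, nB x ≤ K * ‖x‖ := by
  classical
  refine ⟨(∑ i, nB ((Pi.single i 1 : Fin d → ℝ))) + 1, ?_, ?_⟩
  · have := Finset.sum_nonneg (fun i (_ : i ∈ Finset.univ) => hB.nonneg ((Pi.single i 1 : Fin d → ℝ)))
    linarith
  · intro x
    have hx : x = ∑ i, x i • (Pi.single i 1 : Fin d → ℝ) := by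
      ext j
      simp [Pi.single_apply, Finset.sum_apply, mul_comm]
    calc nB x = nB (∑ i, x i • (Pi.single i 1 : Fin d → ℝ)) := by rw [← hx]
      _ ≤ ∑ i, nB (x i • (Pi.single i 1 : Fin d → ℝ)) := nB_sum_le hB _ _
      _ = ∑ i, |x i| * nB ((Pi.single i 1 : Fin d → ℝ)) := by simp [hB.smul]
      _ ≤ ∑ i, ‖x‖ * nB ((Pi.single i 1 : Fin d → ℝ)) := by
          refine Finset.sum_le_sum fun i _ => ?_
          exact mul_le_mul_of_nonneg_right (by simpa using norm_le_pi_norm x i) (hB.nonneg _)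
      _ = (∑ i, nB ((Pi.single i 1 : Fin d → ℝ))) * ‖x‖ := by rw [Finset.sum_mul]; exact Finset.sum_congr rfl fun i _ => mul_comm _ _
      _ ≤ ((∑ i, nB ((Pi.single i 1 : Fin d → ℝ))) + 1) * ‖x‖ := by
          apply mul_le_mul_of_nonneg_right (by linarith) (norm_nonneg _)

lemma nB_le_of_sub {x y : Fin d → ℝ} : nB x - nB y ≤ nB (x - y) := by
  have h := hB.add_le (x - y) y
  simp only [sub_add_cancel] at h
  linarith

lemma nB_neg (x : Fin d → ℝ) : nB (-x) = nB x := by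
  have h := hB.smul (-1) x
  simpa using h

lemma nB_continuous : Continuous nB := by
  obtain ⟨K, hK0, hKle⟩ := nB_le_K hB
  refine (LipschitzWith.of_dist_le_mul (K := K.toNNReal) fun x y => ?_).continuous
  rw [Real.dist_eq, Real.coe_toNNReal _ hK0.le, dist_eq_norm]
  rw [abs_sub_le_iff]
  constructor
  · exact le_trans (nB_le_of_sub hB) (hKle _)
  · have := nB_le_of_sub hB (x := y) (y := x)
    rw [show y - x = -(x - y) by ring, nB_neg hB] at this
    exact le_trans this (hKle _)

lemma exists_c (hd : 0 < d) : ∃ c : ℝ, 0 < c ∧ ∀ x, c * ‖x‖ ≤ nB x := by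
  have hne : (Metric.sphere (0 : Fin d → ℝ) 1).Nonempty := by
    refine ⟨Pi.single ⟨0, hd⟩ 1, ?_⟩
    simp [Pi.norm_single]
  obtain ⟨x0, hx0S, hmin⟩ :=
    (isCompact_sphere (0 : Fin d → ℝ) 1).exists_isMinOn hne (nB_continuous hB).continuousOn
  have hx0norm : ‖x0‖ = 1 := by simpa using hx0S
  have hx0ne : x0 ≠ 0 := by
    intro h; rw [h] at hx0norm; simp at hx0norm
  have hc0 : 0 < nB x0 :=
    lt_of_le_of_ne (hB.nonneg x0) (fun h => hx0ne ((hB.eq_zero_iff x0).mp h.symm))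
  refine ⟨nB x0, hc0, fun x => ?_⟩
  rcases eq_or_ne x 0 with rfl | hx
  · simp [nB_zero hB]
  · have hxn : 0 < ‖x‖ := norm_pos_iff.mpr hx
    have hu : (‖x‖⁻¹ • x) ∈ Metric.sphere (0 : Fin d → ℝ) 1 := by
      simp [norm_smul, abs_of_pos (inv_pos.mpr hxn), inv_mul_cancel₀ (ne_of_gt hxn)]
    have h1 : nB x0 ≤ nB (‖x‖⁻¹ • x) := hmin hu
    rw [hB.smul, abs_of_pos (inv_pos.mpr hxn)] at h1
    calc nB x0 * ‖x‖ ≤ (‖x‖⁻¹ * nB x) * ‖x‖ :=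
          mul_le_mul_of_nonneg_right h1 (norm_nonneg _)
      _ = nB x := by field_simp

lemma indNorm_nonneg (M : Matrix (Fin d) (Fin d) ℝ) : 0 ≤ indNorm nB M :=
  Real.sSup_nonneg (by rintro r ⟨x, hx, rfl⟩; exact hB.nonneg _)

omit hB in
lemma mulVec_norm_le (M : Matrix (Fin d) (Fin d) ℝ) (x : Fin d → ℝ) :
    ‖M.mulVec x‖ ≤ (∑ i, ∑ j, |M i j|) * ‖x‖ := by
  have hC : 0 ≤ (∑ i, ∑ j, |M i j|) :=
    Finset.sum_nonneg fun i _ => Finset.sum_nonneg fun j _ => abs_nonneg _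
  rw [pi_norm_le_iff_of_nonneg (mul_nonneg hC (norm_nonneg _))]
  intro i
  rw [Real.norm_eq_abs]
  calc |M.mulVec x i| = |∑ j, M i j * x j| := by rfl
    _ ≤ ∑ j, |M i j * x j| := Finset.abs_sum_le_sum_abs _ _
    _ ≤ ∑ j, |M i j| * ‖x‖ := by
        refine Finset.sum_le_sum fun j _ => ?_
        rw [abs_mul]
        exact mul_le_mul_of_nonneg_left (by simpa using norm_le_pi_norm x j) (abs_nonneg _)
    _ = (∑ j, |M i j|) * ‖x‖ := by rw [Finset.sum_mul]
    _ ≤ (∑ i, ∑ j, |M i j|) * ‖x‖ := by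
        refine mul_le_mul_of_nonneg_right ?_ (norm_nonneg _)
        exact Finset.single_le_sum (f := fun i => ∑ j, |M i j|)
          (fun i _ => Finset.sum_nonneg fun j _ => abs_nonneg _) (Finset.mem_univ i)

lemma indNorm_bddAbove {c : ℝ} (hc0 : 0 < c) (hcle : ∀ x, c * ‖x‖ ≤ nB x)
    (M : Matrix (Fin d) (Fin d) ℝ) :
    BddAbove {r | ∃ x, nB x = 1 ∧ r = nB (M.mulVec x)} := by
  obtain ⟨K, hK0, hKle⟩ := nB_le_K hB
  refine ⟨K * ((∑ i, ∑ j, |M i j|) * c⁻¹), ?_⟩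
  rintro r ⟨x, hx, rfl⟩
  have hxb : ‖x‖ ≤ c⁻¹ := by
    have := hcle x
    rw [hx] at this
    rw [← mul_le_mul_iff_right₀ hc0, mul_inv_cancel₀ (ne_of_gt hc0)]
    exact this
  have hC : 0 ≤ (∑ i, ∑ j, |M i j|) :=
    Finset.sum_nonneg fun i _ => Finset.sum_nonneg fun j _ => abs_nonneg _
  calc nB (M.mulVec x) ≤ K * ‖M.mulVec x‖ := hKle _
    _ ≤ K * ((∑ i, ∑ j, |M i j|) * ‖x‖) :=
        mul_le_mul_of_nonneg_left (mulVec_norm_le M x) hK0.le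
    _ ≤ K * ((∑ i, ∑ j, |M i j|) * c⁻¹) := by
        apply mul_le_mul_of_nonneg_left _ hK0.le
        exact mul_le_mul_of_nonneg_left hxb hC

lemma nB_mulVec_le {c : ℝ} (hc0 : 0 < c) (hcle : ∀ x, c * ‖x‖ ≤ nB x)
    (M : Matrix (Fin d) (Fin d) ℝ) (x : Fin d → ℝ) :
    nB (M.mulVec x) ≤ indNorm nB M * nB x := by
  rcases eq_or_ne x 0 with rfl | hx
  · simp [Matrix.mulVec_zero, nB_zero hB]
  · have hnx : 0 < nB x :=
      lt_of_le_of_ne (hB.nonneg x) (fun h => hx ((hB.eq_zero_iff x).mp h.symm))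
    have hy : nB ((nB x)⁻¹ • x) = 1 := by
      rw [hB.smul, abs_of_pos (inv_pos.mpr hnx), inv_mul_cancel₀ (ne_of_gt hnx)]
    have hmem : nB (M.mulVec ((nB x)⁻¹ • x)) ∈
        {r | ∃ x, nB x = 1 ∧ r = nB (M.mulVec x)} := ⟨_, hy, rfl⟩
    have h1 := le_csSup (indNorm_bddAbove hB hc0 hcle M) hmem
    rw [Matrix.mulVec_smul, hB.smul, abs_of_pos (inv_pos.mpr hnx)] at h1
    have h2 : nB (M.mulVec x) = nB x * ((nB x)⁻¹ * nB (M.mulVec x)) := by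
      field_simp
    rw [h2]
    calc nB x * ((nB x)⁻¹ * nB (M.mulVec x)) ≤ nB x * indNorm nB M :=
          mul_le_mul_of_nonneg_left h1 hnx.le
      _ = indNorm nB M * nB x := mul_comm _ _

omit hB in
lemma indNorm_le {M : Matrix (Fin d) (Fin d) ℝ} {B : ℝ}
    (h : ∀ x, nB (M.mulVec x) ≤ B * nB x) (hB0 : 0 ≤ B) : indNorm nB M ≤ B :=
  Real.sSup_le (by rintro r ⟨x, hx, rfl⟩; simpa [hx] using h x) hB0

lemma indNorm_mul_le {c : ℝ} (hc0 : 0 < c) (hcle : ∀ x, c * ‖x‖ ≤ nB x)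
    (M M' : Matrix (Fin d) (Fin d) ℝ) :
    indNorm nB (M * M') ≤ indNorm nB M * indNorm nB M' := by
  refine indNorm_le (fun x => ?_)
    (mul_nonneg (indNorm_nonneg hB M) (indNorm_nonneg hB M'))
  rw [← Matrix.mulVec_mulVec]
  calc nB (M.mulVec (M'.mulVec x)) ≤ indNorm nB M * nB (M'.mulVec x) :=
        nB_mulVec_le hB hc0 hcle M _
    _ ≤ indNorm nB M * (indNorm nB M' * nB x) :=
        mul_le_mul_of_nonneg_left (nB_mulVec_le hB hc0 hcle M' x) (indNorm_nonneg hB M)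
    _ = indNorm nB M * indNorm nB M' * nB x := by ring

lemma nB_listProd (l : List (Fin N)) : ∀ x : Fin d → ℝ,
    nB (((l.map A).reverse.prod).mulVec x) ≤ jsr A ^ l.length * nB x := by
  induction l with
  | nil => intro x; simp [Matrix.one_mulVec]
  | cons i t ih =>
      intro x
      have hm : ((i :: t).map A).reverse.prod = (t.map A).reverse.prod * A i := by
        simp
      rw [hm, ← Matrix.mulVec_mulVec]
      calc nB ((t.map A).reverse.prod.mulVec ((A i).mulVec x))
          ≤ jsr A ^ t.length * nB ((A i).mulVec x) := ih _
        _ ≤ jsr A ^ t.length * (jsr A * nB x) :=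
            mul_le_mul_of_nonneg_left (hB.extremal i x) (pow_nonneg (jsr_nonneg A) _)
        _ = jsr A ^ (i :: t).length * nB x := by
            rw [List.length_cons, pow_succ]; ring

lemma indNorm_listProd (l : List (Fin N)) :
    indNorm nB ((l.map A).reverse.prod) ≤ jsr A ^ l.length :=
  indNorm_le (nB_listProd hB l) (pow_nonneg (jsr_nonneg A) _)


omit hB in
lemma specRad_nonneg (M : Matrix (Fin d) (Fin d) ℝ) : 0 ≤ specRad M :=
  Real.iSup_nonneg fun μ => Real.iSup_nonneg fun _ => norm_nonneg _

lemma specRad_le_indNorm {c : ℝ} (hc0 : 0 < c) (hcle : ∀ x, c * ‖x‖ ≤ nB x)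
    (M : Matrix (Fin d) (Fin d) ℝ) : specRad M ≤ indNorm nB M := by
  classical
  obtain ⟨K, hK0, hKle⟩ := nB_le_K hB
  refine Real.iSup_le (fun μ => Real.iSup_le (fun hμ => ?_) (indNorm_nonneg hB M))
    (indNorm_nonneg hB M)
  rcases eq_or_ne μ 0 with rfl | hμ0
  · simpa using indNorm_nonneg hB M
  -- eigenvector
  rw [spectrum.mem_iff] at hμ
  have hdet : ((algebraMap ℂ (Matrix (Fin d) (Fin d) ℂ)) μ - M.map (algebraMap ℝ ℂ)).det = 0 := by
    by_contra h
    exact hμ ((Matrix.isUnit_iff_isUnit_det _).mpr (Ne.isUnit h))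
  obtain ⟨z, hz0, hz⟩ := (Matrix.exists_mulVec_eq_zero_iff).mpr hdet
  have heig : (M.map (algebraMap ℝ ℂ)).mulVec z = μ • z := by
    rw [Matrix.sub_mulVec, Algebra.algebraMap_eq_smul_one, Matrix.smul_mulVec,
      Matrix.one_mulVec, sub_eq_zero] at hz
    exact hz.symm
  -- the circle-sup construction
  set T : (Fin d → ℂ) → Set ℝ :=
    fun y => {r | ∃ cu : ℂ, ‖cu‖ = 1 ∧ r = nB fun j => (cu * y j).re} with hT
  have Tne : ∀ y, (T y).Nonempty := fun y => ⟨_, 1, by simp, rfl⟩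
  have Tbdd : ∀ y, BddAbove (T y) := by
    intro y
    refine ⟨K * ∑ j, ‖y j‖, ?_⟩
    rintro r ⟨cu, hcu, rfl⟩
    calc nB (fun j => (cu * y j).re) ≤ K * ‖(fun j => (cu * y j).re)‖ := hKle _
      _ ≤ K * ∑ j, ‖y j‖ := by
          refine mul_le_mul_of_nonneg_left ?_ hK0.le
          rw [pi_norm_le_iff_of_nonneg
            (Finset.sum_nonneg fun j _ => norm_nonneg _)]
          intro j
          rw [Real.norm_eq_abs]
          calc |(cu * y j).re| ≤ ‖cu * y j‖ := Complex.abs_re_le_norm _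
            _ = ‖y j‖ := by rw [norm_mul, hcu, one_mul]
            _ ≤ ∑ j, ‖y j‖ :=
                Finset.single_le_sum (f := fun j => ‖y j‖)
                  (fun j _ => norm_nonneg _) (Finset.mem_univ j)
  -- positivity of sSup (T z)
  have hTzpos : 0 < sSup (T z) := by
    obtain ⟨j, hj⟩ : ∃ j, z j ≠ 0 := by
      by_contra h
      push_neg at h
      exact hz0 (funext h)
    have hcases : (z j).re ≠ 0 ∨ (z j).im ≠ 0 := by
      by_contra h
      push_neg at h
      exact hj (Complex.ext h.1 h.2)
    rcases hcases with h | h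
    · have hmem : nB (fun j => ((1:ℂ) * z j).re) ∈ T z := ⟨1, by simp, rfl⟩
      have hpos : 0 < nB (fun j => ((1:ℂ) * z j).re) := by
        refine lt_of_le_of_ne (hB.nonneg _) (fun hh => ?_)
        have := (hB.eq_zero_iff _).mp hh.symm
        have := congrFun this j
        simp only [one_mul] at this
        exact h (by simpa using this)
      exact lt_of_lt_of_le hpos (le_csSup (Tbdd z) hmem)
    · have hmem : nB (fun j => ((-Complex.I) * z j).re) ∈ T z :=
        ⟨-Complex.I, by simp, rfl⟩
      have hpos : 0 < nB (fun j => ((-Complex.I) * z j).re) := by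
        refine lt_of_le_of_ne (hB.nonneg _) (fun hh => ?_)
        have := (hB.eq_zero_iff _).mp hh.symm
        have := congrFun this j
        simp only [Complex.mul_re, Complex.neg_re, Complex.I_re, Complex.neg_im,
          Complex.I_im] at this
        apply h
        simpa using this
      exact lt_of_lt_of_le hpos (le_csSup (Tbdd z) hmem)
  have hμpos : 0 < ‖μ‖ := by
    exact norm_pos_iff.mpr hμ0
  -- key inequality 1 : |μ| * sSup (T z) ≤ sSup (T (μ • z))
  have key1 : ‖μ‖ * sSup (T z) ≤ sSup (T (fun j => μ * z j)) := by
    have hmemmul : ∀ r ∈ T z, ‖μ‖ * r ∈ T (fun j => μ * z j) := by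
      rintro r ⟨cu, hcu, rfl⟩
      refine ⟨cu * ((‖μ‖ : ℂ) / μ), ?_, ?_⟩
      · rw [norm_mul, hcu, one_mul, norm_div, Complex.norm_real,
          norm_norm, div_self (ne_of_gt hμpos)]
      · have harg : (fun j => ((cu * ((‖μ‖ : ℂ) / μ)) * ((fun j => μ * z j) j)).re)
            = fun j => ‖μ‖ * (cu * z j).re := by
          funext j
          have : (cu * ((‖μ‖ : ℂ) / μ)) * (μ * z j)
              = (‖μ‖ : ℂ) * (cu * z j) := by
            field_simp
          rw [this, Complex.re_ofReal_mul]
        rw [harg]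
        have : (fun j => ‖μ‖ * (cu * z j).re)
            = (‖μ‖) • (fun j => (cu * z j).re) := by
          funext j; simp
        rw [this, hB.smul, abs_of_pos hμpos]
    have h1 : ∀ r ∈ T z, r ≤ (‖μ‖)⁻¹ * sSup (T (fun j => μ * z j)) := by
      intro r hr
      have h2 := le_csSup (Tbdd _) (hmemmul r hr)
      rw [inv_mul_eq_div, le_div_iff₀ hμpos, mul_comm]
      exact h2
    have h3 := csSup_le (Tne z) h1
    calc ‖μ‖ * sSup (T z)
        ≤ ‖μ‖ * ((‖μ‖)⁻¹ * sSup (T (fun j => μ * z j))) :=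
          mul_le_mul_of_nonneg_left h3 hμpos.le
      _ = sSup (T (fun j => μ * z j)) := by
          rw [← mul_assoc, mul_inv_cancel₀ (ne_of_gt hμpos), one_mul]
  -- key inequality 2 : sSup (T (M z)) ≤ indNorm M * sSup (T z)
  have key2 : sSup (T (fun j => (M.map (algebraMap ℝ ℂ)).mulVec z j))
      ≤ indNorm nB M * sSup (T z) := by
    refine csSup_le (Tne _) ?_
    rintro r ⟨cu, hcu, rfl⟩
    have hvec : (fun j => (cu * (M.map (algebraMap ℝ ℂ)).mulVec z j).re)
        = M.mulVec (fun j => (cu * z j).re) := by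
      funext j
      have h1 : (M.map (algebraMap ℝ ℂ)).mulVec z j = ∑ l, (M j l : ℂ) * z l := by
        simp [Matrix.mulVec, dotProduct, Matrix.map_apply, Complex.coe_algebraMap]
      rw [h1, Finset.mul_sum, Complex.re_sum]
      have h2 : ∀ l, (cu * ((M j l : ℂ) * z l)).re = M j l * (cu * z l).re := by
        intro l
        rw [show cu * ((M j l : ℂ) * z l) = (M j l : ℂ) * (cu * z l) by ring,
          Complex.re_ofReal_mul]
      simp only [h2]
      rfl
    rw [hvec]
    calc nB (M.mulVec fun j => (cu * z j).re)
        ≤ indNorm nB M * nB (fun j => (cu * z j).re) := nB_mulVec_le hB hc0 hcle M _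
      _ ≤ indNorm nB M * sSup (T z) :=
          mul_le_mul_of_nonneg_left (le_csSup (Tbdd z) ⟨cu, hcu, rfl⟩)
            (indNorm_nonneg hB M)
  -- combine
  have heq : (fun j => (M.map (algebraMap ℝ ℂ)).mulVec z j) = (fun j => μ * z j) := by
    funext j
    rw [heig]
    simp
  rw [heq] at key2
  exact le_of_mul_le_mul_right (le_trans key1 key2) hTzpos

end Aux

lemma exists_path1 {N : ℕ} {P : Matrix (Fin N) (Fin N) ℝ} (hP : IsStochastic P)
    (hsc : StronglyConnected P) (i j : Fin N) :
    ∃ (l : ℕ) (u : Fin (l + 2) → Fin N), u 0 = i ∧ u (Fin.last (l + 1)) = j ∧ IsPWord P u := by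
  have hout : ∃ j0, 0 < P i j0 := by
    by_contra h
    push_neg at h
    have h1 : (∑ j, P i j) ≤ 0 := Finset.sum_nonpos (fun j _ => h j)
    rw [hP.2 i] at h1
    linarith
  obtain ⟨j0, hj0⟩ := hout
  obtain ⟨a, v, hv0, hvl, hv⟩ := hsc j0 j
  refine ⟨a, Fin.cons i v, Fin.cons_zero _ _, ?_, ?_⟩
  · rw [← Fin.succ_last, Fin.cons_succ]
    exact hvl
  · intro t
    refine Fin.cases ?_ (fun s => ?_) t
    · have h0 : (Fin.cons i v : Fin (a + 2) → Fin N) ((0 : Fin (a+1)).castSucc) = i := by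
        simp
      have h1 : (Fin.cons i v : Fin (a + 2) → Fin N) ((0 : Fin (a+1)).succ) = j0 := by
        rw [Fin.cons_succ, hv0]
      rw [h0, h1]
      exact hj0
    · have h0 : (Fin.cons i v : Fin (a + 2) → Fin N) ((s.succ).castSucc) = v s.castSucc := by
        rw [← Fin.succ_castSucc, Fin.cons_succ]
      have h1 : (Fin.cons i v : Fin (a + 2) → Fin N) ((s.succ).succ) = v s.succ := by
        rw [Fin.cons_succ]
      rw [h0, h1]
      exact hv s





set_option maxHeartbeats 1000000 in
/-- if every `P`-cycle realizes the joint spectral radius via its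
spectral radius, then every `P`-word realizes it via its Barabanov norm. -/
theorem barabanov_norm_word_of_spectralRadius_cycle {d N : ℕ}
    (P : Matrix (Fin N) (Fin N) ℝ) (hP : IsStochastic P) (hsc : StronglyConnected P)
    (A : Fin N → Matrix (Fin d) (Fin d) ℝ) (hA : IrredTuple A)
    (nB : (Fin d → ℝ) → ℝ) (hB : IsBarabanovNorm A nB)
    (hcyc : ∀ (k : ℕ) (w : Fin (k + 1) → Fin N), IsPCycle P w →
      specRad (prodW A w) ^ (((k : ℝ) + 1)⁻¹) = jsr A)
    {k : ℕ} (w : Fin (k + 1) → Fin N) (hw : IsPWord P w) :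
    indNorm nB (prodW A w) ^ (((k : ℝ) + 1)⁻¹) = jsr A := by
  classical
  have hJ0 : 0 ≤ jsr A := jsr_nonneg A
  have hkinv : ((k : ℝ) + 1)⁻¹ ≠ 0 := by
    apply inv_ne_zero; positivity
  have hupper : indNorm nB (prodW A w) ≤ jsr A ^ (k + 1) := by
    have h := indNorm_listProd hB (List.ofFn w)
    rwa [List.length_ofFn] at h
  rcases Nat.eq_zero_or_pos d with hd0 | hd
  · -- dimension zero
    subst hd0
    haveI hNne : Nonempty (Fin N) := ⟨w 0⟩
    have hprod0 : ∀ (n : ℕ) (w' : Fin (n + 1) → Fin N), ‖prodW A w'‖ = 0 := by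
      intro n w'
      have h : prodW A w' = 0 := Subsingleton.elim _ _
      rw [h, norm_zero]
    have hjsr : jsr A = 0 := by
      refine le_antisymm ?_ hJ0
      have hb : BddBelow (Set.range fun n : ℕ =>
          ⨆ w' : Fin (n + 1) → Fin N, ‖prodW A w'‖ ^ (((n : ℝ) + 1)⁻¹)) := by
        refine ⟨0, ?_⟩
        rintro x ⟨n, rfl⟩
        exact Real.iSup_nonneg fun _ => Real.rpow_nonneg (norm_nonneg _) _
      refine le_trans (ciInf_le hb 0) ?_
      have h1 : ∀ w' : Fin (0 + 1) → Fin N,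
          ‖prodW A w'‖ ^ (((0 : ℕ) : ℝ) + 1)⁻¹ = 0 := by
        intro w'
        rw [hprod0, Real.zero_rpow (by norm_num)]
      calc (⨆ w' : Fin (0 + 1) → Fin N, ‖prodW A w'‖ ^ (((0 : ℕ) : ℝ) + 1)⁻¹)
          = ⨆ _ : Fin (0 + 1) → Fin N, (0 : ℝ) := iSup_congr h1
        _ ≤ 0 := le_of_eq ciSup_const
    have hind : indNorm nB (prodW A w) = 0 := by
      have hempty : {r | ∃ x, nB x = 1 ∧ r = nB ((prodW A w).mulVec x)} = ∅ := by
        ext r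
        simp only [Set.mem_setOf_eq, Set.mem_empty_iff_false, iff_false, not_exists]
        rintro x ⟨hx, -⟩
        have hx0 : x = 0 := Subsingleton.elim _ _
        rw [hx0, nB_zero hB] at hx
        norm_num at hx
      rw [indNorm, hempty, Real.sSup_empty]
    rw [hind, hjsr, Real.zero_rpow hkinv]
  -- positive dimension
  obtain ⟨c, hc0, hcle⟩ := exists_c hB hd
  rcases eq_or_lt_of_le hJ0 with hJz | hJpos
  · -- jsr = 0
    have hz : jsr A ^ (k + 1) = 0 := by rw [← hJz]; simp
    have h0 : indNorm nB (prodW A w) = 0 :=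
      le_antisymm (by rw [← hz]; exact hupper) (indNorm_nonneg hB _)
    rw [h0, ← hJz, Real.zero_rpow hkinv]
  -- jsr > 0
  obtain ⟨l, u, hu0, hul, hu⟩ := exists_path1 hP hsc (w (Fin.last k)) (w 0)
  have wc : ∀ (a b : ℕ) (ha : a < k + 1) (hb : b < k + 1), a = b →
      w ⟨a, ha⟩ = w ⟨b, hb⟩ := by rintro a b ha hb rfl; rfl
  have uc : ∀ (a b : ℕ) (ha : a < l + 2) (hb : b < l + 2), a = b →
      u ⟨a, ha⟩ = u ⟨b, hb⟩ := by rintro a b ha hb rfl; rfl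
  have hw' : ∀ (a : ℕ) (ha : a < k), 0 < P (w ⟨a, by omega⟩) (w ⟨a + 1, by omega⟩) :=
    fun a ha => hw ⟨a, ha⟩
  have hu' : ∀ (a : ℕ) (ha : a < l + 1), 0 < P (u ⟨a, by omega⟩) (u ⟨a + 1, by omega⟩) :=
    fun a ha => hu ⟨a, ha⟩
  have hu0' : u ⟨0, by omega⟩ = w ⟨k, by omega⟩ := by
    rw [show (⟨0, by omega⟩ : Fin (l + 2)) = 0 by ext; simp, hu0]
    exact congrArg w (by ext; simp)
  have hull : u ⟨l + 1, by omega⟩ = w 0 := by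
    rw [show (⟨l + 1, by omega⟩ : Fin (l + 2)) = Fin.last (l + 1) by ext; simp, hul]
  have Eww : ∀ (a b : ℕ) (pa : a < k + 1) (pb : b < k + 1), b = a + 1 → a < k →
      0 < P (w ⟨a, pa⟩) (w ⟨b, pb⟩) := by rintro a b pa pb rfl h; exact hw' a h
  have Euu : ∀ (a b : ℕ) (pa : a < l + 2) (pb : b < l + 2), b = a + 1 → a < l + 1 →
      0 < P (u ⟨a, pa⟩) (u ⟨b, pb⟩) := by rintro a b pa pb rfl h; exact hu' a h
  have Ewu : ∀ (a b : ℕ) (pa : a < k + 1) (pb : b < l + 2), a = k → b = 1 →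
      0 < P (w ⟨a, pa⟩) (u ⟨b, pb⟩) := by
    rintro a b pa pb rfl rfl
    rw [← hu0']
    exact hu' 0 (by omega)
  have Ew0 : ∀ (a : ℕ) (pa : a < k + 1), a = k → l = 0 → 0 < P (w ⟨a, pa⟩) (w 0) := by
    rintro a pa rfl hl
    rw [← hu0', ← hull]
    exact Euu _ _ _ _ (by omega) (by omega)
  have Eu0 : ∀ (a : ℕ) (pa : a < l + 2), a = l → 0 < P (u ⟨a, pa⟩) (w 0) := by
    rintro a pa rfl
    rw [← hull]
    exact Euu _ _ _ _ rfl (by omega)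
  set cyc : Fin (k + l + 1) → Fin N := fun t =>
    if h : (t : ℕ) ≤ k then w ⟨(t : ℕ), by omega⟩
    else u ⟨(t : ℕ) - k, by have h2 := t.isLt; omega⟩ with hcycdef
  have hcyc0 : cyc 0 = w 0 := by
    rw [hcycdef]
    simp only
    rw [dif_pos (by simp)]
    exact congrArg w (by ext; simp)
  have hcycle : IsPCycle P cyc := by
    constructor
    · intro t
      have hc1 : cyc t.castSucc = if h : (t : ℕ) ≤ k then w ⟨(t : ℕ), by omega⟩
          else u ⟨(t : ℕ) - k, by have h2 := t.isLt.trans (Nat.lt_succ_self _); omega⟩ := rfl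
      have hc2 : cyc t.succ = if h : ((t : ℕ) + 1) ≤ k then w ⟨(t : ℕ) + 1, by omega⟩
          else u ⟨(t : ℕ) + 1 - k, by have h2 := t.isLt; omega⟩ := rfl
      rw [hc1, hc2]
      by_cases h1 : (t : ℕ) + 1 ≤ k
      · simp only [dif_pos (show (t : ℕ) ≤ k by omega), dif_pos h1]
        exact Eww _ _ _ _ rfl (by omega)
      · by_cases h2 : (t : ℕ) ≤ k
        · simp only [dif_pos h2, dif_neg h1]
          exact Ewu _ _ _ _ (by omega) (by omega)
        · simp only [dif_neg h2, dif_neg h1]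
          exact Euu _ _ _ _ (by omega) (by have h3 := t.isLt; omega)
    · have hc1 : cyc (Fin.last (k + l)) = if h : (k + l : ℕ) ≤ k then w ⟨k + l, by omega⟩
          else u ⟨k + l - k, by omega⟩ := rfl
      have hPP : P (cyc (Fin.last (k + l))) (cyc 0)
          = P (if h : (k + l : ℕ) ≤ k then w ⟨k + l, by omega⟩
              else u ⟨k + l - k, by omega⟩) (w 0) := congrArg₂ P hc1 hcyc0
      rw [hPP]
      by_cases h2 : (k + l : ℕ) ≤ k
      · simp only [dif_pos h2]
        exact Ew0 _ _ (by omega) (by omega)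
      · simp only [dif_neg h2]
        exact Eu0 _ _ (by omega)
  obtain ⟨tl, htldef⟩ : ∃ tl : Fin l → Fin N,
      tl = fun s : Fin l => u ⟨(s : ℕ) + 1, by have := s.isLt; omega⟩ := ⟨_, rfl⟩
  have tlval : ∀ (a : ℕ) (pa : a < l) (b : ℕ) (pb : b < l + 2), b = a + 1 →
      tl ⟨a, pa⟩ = u ⟨b, pb⟩ := by
    rintro a pa b pb rfl
    rw [htldef]
  have hofn : List.ofFn cyc = List.ofFn w ++ List.ofFn tl := by
    apply List.ext_getElem
    · simp
    · intro n h1 h2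
      rw [List.getElem_ofFn, List.getElem_append]
      simp only [List.length_ofFn] at h1 h2 ⊢
      by_cases hn : n < k + 1
      · rw [dif_pos (by simpa using hn), List.getElem_ofFn]
        have hc : cyc ⟨n, by omega⟩ = if h : n ≤ k then w ⟨n, by omega⟩
            else u ⟨n - k, by omega⟩ := rfl
        rw [hc]
        simp only [dif_pos (show n ≤ k by omega)]
      · rw [dif_neg (by simpa using hn), List.getElem_ofFn]
        have hc : cyc ⟨n, by omega⟩ = if h : n ≤ k then w ⟨n, by omega⟩
            else u ⟨n - k, by omega⟩ := rfl
        rw [hc]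
        simp only [dif_neg (show ¬ n ≤ k by omega)]
        exact (uc (n - k) (n - (k + 1) + 1) _ (by omega) (by omega)).trans
          (tlval (n - (k + 1)) (by omega) (n - (k + 1) + 1) (by omega) rfl).symm
  have hprodsplit : prodW A cyc = ((List.ofFn tl).map A).reverse.prod * prodW A w := by
    show ((List.ofFn cyc).map A).reverse.prod = _
    rw [hofn, List.map_append, List.reverse_append, List.prod_append]
    rfl
  have hsc2 := hcyc (k + l) cyc hcycle
  have hspec : specRad (prodW A cyc) = jsr A ^ (k + l + 1) := by
    have h1 := congrArg (fun x : ℝ => x ^ (((k + l : ℕ) : ℝ) + 1)) hsc2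
    rw [Real.rpow_inv_rpow (specRad_nonneg _) (by positivity)] at h1
    rw [h1, show (((k + l : ℕ) : ℝ) + 1) = ((k + l + 1 : ℕ) : ℝ) by push_cast; ring,
      Real.rpow_natCast]
  have hlow : jsr A ^ (k + 1) ≤ indNorm nB (prodW A w) := by
    have h1 : jsr A ^ (k + l + 1) ≤ jsr A ^ l * indNorm nB (prodW A w) := by
      calc jsr A ^ (k + l + 1) = specRad (prodW A cyc) := hspec.symm
        _ ≤ indNorm nB (prodW A cyc) := specRad_le_indNorm hB hc0 hcle _
        _ ≤ indNorm nB (((List.ofFn tl).map A).reverse.prod) * indNorm nB (prodW A w) := by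
            rw [hprodsplit]; exact indNorm_mul_le hB hc0 hcle _ _
        _ ≤ jsr A ^ l * indNorm nB (prodW A w) := by
            refine mul_le_mul_of_nonneg_right ?_ (indNorm_nonneg hB _)
            have h := indNorm_listProd hB (List.ofFn tl)
            rwa [List.length_ofFn] at h
    rw [show k + l + 1 = l + (k + 1) by omega, pow_add] at h1
    exact le_of_mul_le_mul_left h1 (pow_pos hJpos l)
  have heq : indNorm nB (prodW A w) = jsr A ^ (k + 1) := le_antisymm hupper hlow
  have hne : (k : ℝ) + 1 ≠ 0 := by positivity
  rw [heq, ← Real.rpow_natCast (jsr A) (k + 1), ← Real.rpow_mul hJ0,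
    show ((k + 1 : ℕ) : ℝ) * ((k : ℝ) + 1)⁻¹ = 1 by push_cast; exact mul_inv_cancel₀ hne,
    Real.rpow_one]


end JSRpaper
end
end

section
/- Let P be a stochastic strongly connected N×N matrix with positive diagonal entries and A = (A_1, ..., A_N) be an irreducible N-tuple of invertible d×d real matrices. Then for every s ∈ {1,...,N}, the semigroup C(P,s) of matrix products along P-cycles starting at s is irreducible (has no common invariant subspace other than {0} and ℝ^d). -/
open scoped BigOperators

noncomputable section
namespace JSRpaper

attribute [local instance] Matrix.linftyOpNormedRing

/-! ### Auxiliary material for Statement 13 -/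

section Aux13

/-- Product (as a unit) of the matrices along a list of indices, in reversed order. -/
def ulp {d N : ℕ} (uA : Fin N → (Matrix (Fin d) (Fin d) ℝ)ˣ) (l : List (Fin N)) :
    (Matrix (Fin d) (Fin d) ℝ)ˣ :=
  ((l.map uA).reverse).prod

lemma ulp_cons {d N : ℕ} (uA : Fin N → (Matrix (Fin d) (Fin d) ℝ)ˣ) (c : Fin N)
    (l : List (Fin N)) : ulp uA (c :: l) = ulp uA l * uA c := by
  simp [ulp]

lemma ulp_append {d N : ℕ} (uA : Fin N → (Matrix (Fin d) (Fin d) ℝ)ˣ)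
    (l₁ l₂ : List (Fin N)) : ulp uA (l₁ ++ l₂) = ulp uA l₂ * ulp uA l₁ := by
  simp [ulp]

lemma ulp_coe {d N : ℕ} (uA : Fin N → (Matrix (Fin d) (Fin d) ℝ)ˣ)
    (A : Fin N → Matrix (Fin d) (Fin d) ℝ) (hu : ∀ i, (uA i : Matrix (Fin d) (Fin d) ℝ) = A i)
    (l : List (Fin N)) :
    (ulp uA l : Matrix (Fin d) (Fin d) ℝ) = ((l.map A).reverse).prod := by
  induction l with
  | nil => simp [ulp]
  | cons c l ih => simp [ulp_cons, ih, hu]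

/-- `u` stabilizes the subspace `V`. -/
def stabU {d : ℕ} (V : Submodule ℝ (Fin d → ℝ)) (u : (Matrix (Fin d) (Fin d) ℝ)ˣ) : Prop :=
  V.map ((u : Matrix (Fin d) (Fin d) ℝ)).mulVecLin = V

lemma stabU_mul {d : ℕ} {V : Submodule ℝ (Fin d → ℝ)} {u v : (Matrix (Fin d) (Fin d) ℝ)ˣ}
    (hu : stabU V u) (hv : stabU V v) : stabU V (u * v) := by
  unfold stabU at *
  rw [Units.val_mul, Matrix.mulVecLin_mul, Submodule.map_comp, hv, hu]

lemma stabU_inv {d : ℕ} {V : Submodule ℝ (Fin d → ℝ)} {u : (Matrix (Fin d) (Fin d) ℝ)ˣ}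
    (hu : stabU V u) : stabU V u⁻¹ := by
  unfold stabU at *
  conv_lhs => rw [← hu]
  rw [← Submodule.map_comp, ← Matrix.mulVecLin_mul, ← Units.val_mul, inv_mul_cancel,
    Units.val_one, Matrix.mulVecLin_one, Submodule.map_id]

lemma stabU_one {d : ℕ} {V : Submodule ℝ (Fin d → ℝ)} :
    stabU V (1 : (Matrix (Fin d) (Fin d) ℝ)ˣ) := by
  unfold stabU
  rw [Units.val_one, Matrix.mulVecLin_one, Submodule.map_id]

/-- An invertible matrix mapping `V` into itself maps it onto itself. -/
lemma stabU_of_le {d : ℕ} {V : Submodule ℝ (Fin d → ℝ)} {u : (Matrix (Fin d) (Fin d) ℝ)ˣ}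
    (hle : V.map ((u : Matrix (Fin d) (Fin d) ℝ)).mulVecLin ≤ V) : stabU V u := by
  have h1 : (u : Matrix (Fin d) (Fin d) ℝ).mulVecLin ∘ₗ
      ((u⁻¹ : (Matrix (Fin d) (Fin d) ℝ)ˣ) : Matrix (Fin d) (Fin d) ℝ).mulVecLin
      = LinearMap.id := by
    rw [← Matrix.mulVecLin_mul, ← Units.val_mul, mul_inv_cancel, Units.val_one,
      Matrix.mulVecLin_one]
  have h2 : ((u⁻¹ : (Matrix (Fin d) (Fin d) ℝ)ˣ) : Matrix (Fin d) (Fin d) ℝ).mulVecLin ∘ₗ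
      (u : Matrix (Fin d) (Fin d) ℝ).mulVecLin = LinearMap.id := by
    rw [← Matrix.mulVecLin_mul, ← Units.val_mul, inv_mul_cancel, Units.val_one,
      Matrix.mulVecLin_one]
  let e : (Fin d → ℝ) ≃ₗ[ℝ] (Fin d → ℝ) :=
    LinearEquiv.ofLinear (u : Matrix (Fin d) (Fin d) ℝ).mulVecLin
      ((u⁻¹ : (Matrix (Fin d) (Fin d) ℝ)ˣ) : Matrix (Fin d) (Fin d) ℝ).mulVecLin h1 h2
  refine Submodule.eq_of_le_of_finrank_le hle ?_
  have he : (u : Matrix (Fin d) (Fin d) ℝ).mulVecLin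
      = (e : (Fin d → ℝ) →ₗ[ℝ] (Fin d → ℝ)) := rfl
  rw [he, LinearEquiv.finrank_map_eq]

/-- `P`-cycles at `s` in list form: the word `s :: t`. -/
def CycP {N : ℕ} (P : Matrix (Fin N) (Fin N) ℝ) (s : Fin N) (t : List (Fin N)) : Prop :=
  List.Chain (fun a b => 0 < P a b) s t ∧ ∀ b ∈ (s :: t).getLast?, 0 < P b s

lemma chain'_ofFn {N : ℕ} (P : Matrix (Fin N) (Fin N) ℝ) {k : ℕ} (w : Fin (k + 1) → Fin N)
    (hw : IsPWord P w) : List.Chain' (fun a b => 0 < P a b) (List.ofFn w) := by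
  rw [List.Chain', List.isChain_iff_getElem]
  intro j hj
  rw [List.length_ofFn] at hj
  have hj' : j < k := by omega
  have := hw ⟨j, hj'⟩
  rw [List.getElem_ofFn, List.getElem_ofFn]
  exact this

lemma getLast?_ofFn {α : Type*} {k : ℕ} (w : Fin (k + 1) → α) :
    (List.ofFn w).getLast? = some (w (Fin.last k)) := by
  have hne : List.ofFn w ≠ [] := by
    simp [← List.length_pos_iff_ne_nil]
  rw [List.getLast?_eq_getLast hne, List.getLast_eq_getElem]
  congr 1
  rw [List.getElem_ofFn]
  congr 1
  ext
  simp [Fin.last]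

/-- Doubling a letter of a cycle (using the positive diagonal) yields a cycle. -/
lemma cyc_double {N : ℕ} (P : Matrix (Fin N) (Fin N) ℝ) (hdiag : ∀ i, 0 < P i i)
    (s : Fin N) (pre suf : List (Fin N)) (c : Fin N) (t : List (Fin N))
    (h : CycP P s t) (he : s :: t = pre ++ c :: suf) :
    ∃ t2, s :: t2 = pre ++ c :: c :: suf ∧ CycP P s t2 := by
  obtain ⟨hch, hlast⟩ := h
  have hch' : List.Chain' (fun a b => 0 < P a b) (pre ++ c :: suf) := by
    rw [← he]; exact hch
  rw [List.Chain', List.isChain_append] at hch'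
  have hch2 : List.Chain' (fun a b => 0 < P a b) (pre ++ c :: c :: suf) := by
    rw [List.Chain', List.isChain_append]
    refine ⟨hch'.1, List.isChain_cons_cons.mpr ⟨hdiag c, hch'.2.1⟩, ?_⟩
    intro x hx y hy
    simp only [List.head?_cons, Option.mem_some_iff] at hy
    subst hy
    exact hch'.2.2 x hx c (by simp)
  have hlast2 : (pre ++ c :: c :: suf).getLast? = (pre ++ c :: suf).getLast? := by
    rw [List.getLast?_append, List.getLast?_append, List.getLast?_cons_cons]
  have hhead : ∃ t2, s :: t2 = pre ++ c :: c :: suf := by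
    cases pre with
    | nil =>
      simp only [List.nil_append, List.cons.injEq] at he
      exact ⟨c :: suf, by simp [he.1]⟩
    | cons p pre' =>
      simp only [List.cons_append, List.cons.injEq] at he
      exact ⟨pre' ++ c :: c :: suf, by simp [he.1]⟩
  obtain ⟨t2, he2⟩ := hhead
  refine ⟨t2, he2, ?_, ?_⟩
  · have hc2 : List.Chain' (fun a b => 0 < P a b) (s :: t2) := by
      rw [he2]; exact hch2
    exact hc2
  · intro b hb
    apply hlast
    rwa [he, ← hlast2, ← he2]

/-- Key induction: every suffix-product of a cycle at `s` stabilizes `V`. -/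
lemma keyLem {d N : ℕ} (P : Matrix (Fin N) (Fin N) ℝ) (hdiag : ∀ i, 0 < P i i)
    (V : Submodule ℝ (Fin d → ℝ)) (uA : Fin N → (Matrix (Fin d) (Fin d) ℝ)ˣ) (s : Fin N)
    (hcyc : ∀ t : List (Fin N), CycP P s t → stabU V (ulp uA (s :: t))) :
    ∀ (suf pre t : List (Fin N)), CycP P s t → s :: t = pre ++ suf →
      stabU V (ulp uA suf) := by
  intro suf
  induction suf with
  | nil => intro pre t _ _; exact stabU_one
  | cons c suf' ih =>
    intro pre t hC he
    have hT : stabU V (ulp uA suf') := by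
      refine ih (pre ++ [c]) t hC ?_
      rw [he, List.append_assoc]
      rfl
    have hfull : stabU V (ulp uA (s :: t)) := hcyc t hC
    rw [he, ulp_append, ulp_cons] at hfull
    obtain ⟨t2, he2, hC2⟩ := cyc_double P hdiag s pre suf' c t hC he
    have hfull2 : stabU V (ulp uA (s :: t2)) := hcyc t2 hC2
    rw [he2, ulp_append, ulp_cons, ulp_cons] at hfull2
    have hAc : stabU V (uA c) := by
      have hid : uA c = (ulp uA suf')⁻¹ * (ulp uA suf' * uA c * uA c * ulp uA pre) *
          (ulp uA suf' * uA c * ulp uA pre)⁻¹ * ulp uA suf' := by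
        group
      rw [hid]
      exact stabU_mul (stabU_mul (stabU_mul (stabU_inv hT) hfull2) (stabU_inv hfull)) hT
    rw [ulp_cons]
    exact stabU_mul hT hAc

end Aux13

/-- for a stochastic strongly connected `P` with positive diagonal and
an irreducible tuple of invertible matrices, each semigroup `C(P, s)` is irreducible. -/
theorem cycle_semigroup_irreducible {d N : ℕ}
    (P : Matrix (Fin N) (Fin N) ℝ) (hP : IsStochastic P) (hsc : StronglyConnected P)
    (hdiag : ∀ i, 0 < P i i)
    (A : Fin N → Matrix (Fin d) (Fin d) ℝ) (hA : IrredTuple A)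
    (hinv : ∀ i, IsUnit (A i)) (s : Fin N)
    (V : Submodule ℝ (Fin d → ℝ))
    (hV : ∀ (k : ℕ) (w : Fin (k + 1) → Fin N), IsPCycle P w → w 0 = s →
      ∀ x ∈ V, (prodW A w).mulVec x ∈ V) :
    V = ⊥ ∨ V = ⊤ := by
  by_cases hN : 0 < N
  · -- main case
    have hAinv := hinv
    set uA : Fin N → (Matrix (Fin d) (Fin d) ℝ)ˣ := fun i => (hinv i).unit with huA
    have hu : ∀ i, (uA i : Matrix (Fin d) (Fin d) ℝ) = A i := fun i => (hinv i).unit_spec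
    -- cycles stabilize V
    have hcyc : ∀ t : List (Fin N), CycP P s t → stabU V (ulp uA (s :: t)) := by
      intro t hC
      apply stabU_of_le
      rintro y ⟨x, hx, rfl⟩
      rw [Matrix.mulVecLin_apply, ulp_coe uA A hu]
      obtain ⟨hch, hlast⟩ := hC
      have hch' : List.Chain' (fun a b => 0 < P a b) (s :: t) := hch
      have hword : IsPWord P ((s :: t).get : Fin (t.length + 1) → Fin N) := by
        intro j
        exact List.isChain_iff_getElem.mp hch' j.1 (by simp)
      have hne : (s :: t) ≠ [] := by simp
      have hwrap : 0 < P ((s :: t).get (Fin.last t.length))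
          ((s :: t).get (0 : Fin (t.length + 1))) := by
        have hmem : (s :: t).getLast hne ∈ (s :: t).getLast? := by
          rw [List.getLast?_eq_getLast hne]; rfl
        have h1 := hlast _ hmem
        have hg : (s :: t).getLast hne = (s :: t).get (Fin.last t.length) := by
          rw [List.getLast_eq_getElem]
          congr 1
        rwa [hg] at h1
      have := hV t.length ((s :: t).get) ⟨hword, hwrap⟩ rfl x hx
      rwa [prodW, List.ofFn_get] at this
    -- each A i stabilizes V
    have hstab : ∀ i : Fin N, ∀ x ∈ V, (A i).mulVec x ∈ V := by
      intro i
      obtain ⟨k1, w1, hw10, hw1l, hw1⟩ := hsc s i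
      obtain ⟨k2, w2, hw20, hw2l, hw2⟩ := hsc i s
      -- the cycle list  ofFn w1 ++ ofFn w2
      set l : List (Fin N) := List.ofFn w1 ++ List.ofFn w2 with hl
      have hchl : List.Chain' (fun a b => 0 < P a b) l := by
        rw [hl, List.Chain', List.isChain_append]
        refine ⟨chain'_ofFn P w1 hw1, chain'_ofFn P w2 hw2, ?_⟩
        intro x hx y hy
        rw [getLast?_ofFn] at hx
        simp only [Option.mem_some_iff] at hx
        subst hx
        rw [List.ofFn_succ] at hy
        simp only [List.head?_cons, Option.mem_some_iff] at hy
        subst hy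
        rw [hw1l, hw20]
        exact hdiag i
      have hlastl : l.getLast? = some s := by
        rw [hl, List.getLast?_append, getLast?_ofFn, hw2l]
        rfl
      -- head decomposition
      have hhead : ∃ tl, l = s :: tl := by
        rw [hl, List.ofFn_succ, hw10]
        exact ⟨_, rfl⟩
      obtain ⟨tl, htl⟩ := hhead
      have hCyc : CycP P s tl := by
        constructor
        · have : List.Chain' (fun a b => 0 < P a b) (s :: tl) := by rw [← htl]; exact hchl
          exact this
        · intro b hb
          rw [← htl, hlastl] at hb
          simp only [Option.mem_some_iff] at hb
          subst hb
          exact hdiag s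
      -- i appears in l
      have hmem : i ∈ l := by
        rw [hl]
        apply List.mem_append_left
        rw [← hw1l, List.mem_ofFn]
        exact ⟨Fin.last k1, rfl⟩
      obtain ⟨pre, suf, hps⟩ := List.append_of_mem hmem
      have hdec : s :: tl = pre ++ i :: suf := by rw [← htl, hps]
      have h1 : stabU V (ulp uA (i :: suf)) :=
        keyLem P hdiag V uA s hcyc (i :: suf) pre tl hCyc hdec
      have h2 : stabU V (ulp uA suf) := by
        refine keyLem P hdiag V uA s hcyc suf (pre ++ [i]) tl hCyc ?_
        rw [hdec, List.append_assoc]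
        rfl
      rw [ulp_cons] at h1
      have hAi : stabU V (uA i) := by
        have hid : uA i = (ulp uA suf)⁻¹ * (ulp uA suf * uA i) := by group
        rw [hid]
        exact stabU_mul (stabU_inv h2) h1
      intro x hx
      have hmem2 : (A i).mulVecLin x ∈ V.map ((A i).mulVecLin) :=
        Submodule.mem_map_of_mem hx
      rw [← hu i] at hmem2
      rw [hAi] at hmem2
      rwa [Matrix.mulVecLin_apply, hu i] at hmem2
    exact hA V hstab
  · exact absurd s.pos hN


end JSRpaper
end
end

section
/- Let A = (A_1, ..., A_N) be an irreducible N-tuple of invertible d×d real matrices and P a stochastic strongly connected matrix with positive diagonal entries. If there exists an invertible G ∈ M_d(ℝ) such that ρ_d(A)^{-1} G A_i G^{-1} is orthogonal for every i ∈ {1,...,N}, then ρ_d(A) = ρ_p(P, A). -/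
open scoped BigOperators

noncomputable section
namespace JSRpaper

attribute [local instance] Matrix.linftyOpNormedRing

/-! ### Auxiliary lemmas -/

attribute [local instance] Matrix.linftyOpNormedAlgebra Matrix.linfty_opNormOneClass

open Matrix Filter

section Aux

lemma norm_le_card {d : ℕ} (R : Matrix (Fin d) (Fin d) ℝ) (h : ∀ i j, |R i j| ≤ 1) :
    ‖R‖ ≤ d := by
  rw [Matrix.linfty_opNorm_def]
  have : ((Finset.univ : Finset (Fin d)).sup fun i => ∑ j, ‖R i j‖₊) ≤ (d : NNReal) := by
    apply Finset.sup_le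
    intro i _
    calc ∑ j, ‖R i j‖₊ ≤ ∑ _j : Fin d, 1 := by
          apply Finset.sum_le_sum
          intro j _
          have := h i j
          rw [← Real.nnnorm_abs]
          have h2 : ‖|R i j|‖ ≤ (1 : ℝ) := by rw [Real.norm_eq_abs, abs_abs]; exact this
          exact_mod_cast h2
      _ = d := by simp
  exact_mod_cast this

lemma orth_entry_le {d : ℕ} (R : Matrix (Fin d) (Fin d) ℝ) (h : Rᵀ * R = 1) (i j : Fin d) :
    |R i j| ≤ 1 := by
  have h1 : (Rᵀ * R) j j = 1 := by rw [h]; simp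
  rw [Matrix.mul_apply] at h1
  simp only [Matrix.transpose_apply] at h1
  have h2 : R i j * R i j ≤ 1 := by
    rw [← h1]
    have : ∀ k ∈ Finset.univ, 0 ≤ R k j * R k j := fun k _ => mul_self_nonneg _
    exact Finset.single_le_sum this (Finset.mem_univ i)
  nlinarith [abs_nonneg (R i j), sq_abs (R i j)]

lemma orth_mul {d : ℕ} (R S : Matrix (Fin d) (Fin d) ℝ) (hR : Rᵀ * R = 1) (hS : Sᵀ * S = 1) :
    (R * S)ᵀ * (R * S) = 1 := by
  rw [Matrix.transpose_mul]
  calc Sᵀ * Rᵀ * (R * S) = Sᵀ * (Rᵀ * R) * S := by rw [mul_assoc, mul_assoc, mul_assoc]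
    _ = 1 := by rw [hR, mul_one, hS]

lemma orth_list_prod {d : ℕ} (l : List (Matrix (Fin d) (Fin d) ℝ))
    (h : ∀ M ∈ l, Mᵀ * M = 1) : l.prodᵀ * l.prod = 1 := by
  induction l with
  | nil => simp
  | cons M l ih =>
    rw [List.prod_cons]
    exact orth_mul _ _ (h M List.mem_cons_self)
      (ih fun M hM => h M (List.mem_cons_of_mem _ hM))

lemma conj_list_prod {d : ℕ} {ι : Type*} (A Q : ι → Matrix (Fin d) (Fin d) ℝ) (ρ : ℝ)
    (G Gi : Matrix (Fin d) (Fin d) ℝ) (h1 : Gi * G = 1) (h2 : G * Gi = 1)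
    (hAQ : ∀ i, A i = ρ • (Gi * Q i * G)) (l : List ι) :
    (l.map A).prod = ρ ^ l.length • (Gi * (l.map Q).prod * G) := by
  have h3 : ∀ Z : Matrix (Fin d) (Fin d) ℝ, G * (Gi * Z) = Z := fun Z => by
    rw [← mul_assoc, h2, one_mul]
  induction l with
  | nil => simpa using h1.symm
  | cons i l ih =>
    rw [List.map_cons, List.prod_cons, ih, List.map_cons, List.prod_cons, hAQ i,
      List.length_cons]
    have key : Gi * Q i * G * (Gi * (List.map Q l).prod * G)
        = Gi * (Q i * (List.map Q l).prod) * G := by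
      simp only [mul_assoc, h3]
    rw [smul_mul_assoc, mul_smul_comm, smul_smul, key, pow_succ, mul_comm]

lemma prodW_repr {d N n : ℕ} (A Q : Fin N → Matrix (Fin d) (Fin d) ℝ) (ρ : ℝ)
    (G Gi : Matrix (Fin d) (Fin d) ℝ) (h1 : Gi * G = 1) (h2 : G * Gi = 1)
    (hAQ : ∀ i, A i = ρ • (Gi * Q i * G)) (w : Fin (n + 1) → Fin N) :
    prodW A w = ρ ^ (n + 1) • (Gi * prodW Q w * G) := by
  unfold prodW
  rw [← List.map_reverse, ← List.map_reverse,
    conj_list_prod A Q ρ G Gi h1 h2 hAQ ((List.ofFn w).reverse)]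
  simp

lemma prodW_orth {d N n : ℕ} (Q : Fin N → Matrix (Fin d) (Fin d) ℝ)
    (hQ : ∀ i, (Q i)ᵀ * Q i = 1) (w : Fin (n + 1) → Fin N) :
    (prodW Q w)ᵀ * prodW Q w = 1 := by
  apply orth_list_prod
  intro M hM
  rw [List.mem_reverse, List.mem_map] at hM
  obtain ⟨i, _, rfl⟩ := hM
  exact hQ i

lemma rpow_pow_inv (ρ : ℝ) (hρ : 0 < ρ) (n : ℕ) :
    (ρ ^ (n + 1)) ^ (((n : ℝ) + 1)⁻¹) = ρ := by
  rw [← Real.rpow_natCast ρ (n + 1), ← Real.rpow_mul hρ.le]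
  rw [show ((n + 1 : ℕ) : ℝ) * (((n : ℝ) + 1)⁻¹) = 1 by
    push_cast
    rw [mul_inv_cancel₀]
    positivity]
  exact Real.rpow_one ρ

lemma tendsto_rpow_inv_one (c : ℝ) (hc : 0 < c) :
    Filter.Tendsto (fun n : ℕ => c ^ (((n : ℝ) + 1)⁻¹)) Filter.atTop (nhds 1) := by
  have h0 : Filter.Tendsto (fun n : ℕ => ((n : ℝ) + 1)⁻¹) Filter.atTop (nhds 0) := by
    apply Filter.Tendsto.comp tendsto_inv_atTop_zero
    exact Filter.tendsto_atTop_add_const_right _ 1 tendsto_natCast_atTop_atTop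
  have h1 : Filter.Tendsto (fun n : ℕ => Real.log c * ((n : ℝ) + 1)⁻¹) Filter.atTop (nhds 0) := by
    simpa using h0.const_mul (Real.log c)
  have h2 := (Real.continuous_exp.tendsto 0).comp h1
  rw [Real.exp_zero] at h2
  have heq : (fun n : ℕ => c ^ (((n : ℝ) + 1)⁻¹))
      = fun n : ℕ => Real.exp (Real.log c * ((n : ℝ) + 1)⁻¹) := by
    funext n
    rw [Real.rpow_def_of_pos hc]
  rw [heq]
  exact h2

lemma chainWt_nonneg {ι : Type*} [Fintype ι] {ν : ι → ℝ} {P : Matrix ι ι ℝ}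
    (hν : ∀ i, 0 ≤ ν i) (hP : ∀ i j, 0 ≤ P i j) {n : ℕ} (w : Fin (n + 1) → ι) :
    0 ≤ chainWt ν P w :=
  mul_nonneg (hν _) (Finset.prod_nonneg fun t _ => hP _ _)

lemma chainWt_snoc {ι : Type*} [Fintype ι] (ν : ι → ℝ) (P : Matrix ι ι ℝ) {n : ℕ}
    (u : Fin (n + 1) → ι) (j : ι) :
    chainWt ν P (Fin.snoc u j) = chainWt ν P u * P (u (Fin.last n)) j := by
  unfold chainWt
  rw [Fin.prod_univ_castSucc]
  have h0 : (Fin.snoc u j : Fin (n + 2) → ι) 0 = u 0 := by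
    have : (0 : Fin (n + 2)) = Fin.castSucc 0 := rfl
    rw [this, Fin.snoc_castSucc]
  have hlast : (Fin.snoc u j : Fin (n + 2) → ι) ((Fin.last n).castSucc) = u (Fin.last n) :=
    Fin.snoc_castSucc _ _ _
  have hlast2 : (Fin.snoc u j : Fin (n + 2) → ι) ((Fin.last n).succ) = j := by
    rw [Fin.succ_last, Fin.snoc_last]
  have hmid : ∀ t : Fin n,
      P ((Fin.snoc u j : Fin (n + 2) → ι) (t.castSucc.castSucc))
        ((Fin.snoc u j : Fin (n + 2) → ι) (t.castSucc.succ))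
      = P (u t.castSucc) (u t.succ) := by
    intro t
    rw [Fin.succ_castSucc, Fin.snoc_castSucc, Fin.snoc_castSucc]
  rw [h0, hlast, hlast2]
  rw [Finset.prod_congr rfl fun t _ => hmid t]
  ring

lemma sum_chainWt {ι : Type*} [Fintype ι] [DecidableEq ι] (ν : ι → ℝ) (P : Matrix ι ι ℝ)
    (hν : ∑ i, ν i = 1) (hP : ∀ i, ∑ j, P i j = 1) (n : ℕ) :
    ∑ w : Fin (n + 1) → ι, chainWt ν P w = 1 := by
  induction n with
  | zero =>
    rw [← hν]
    apply Fintype.sum_equiv (Equiv.funUnique (Fin 1) ι)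
    intro w
    simp [chainWt]
  | succ n ih =>
    set e : ι × (Fin (n + 1) → ι) ≃ (Fin (n + 2) → ι) :=
      Fin.snocEquiv (fun _ : Fin (n + 2) => ι) with he'
    rw [← Equiv.sum_comp e (fun w => chainWt ν P w)]
    rw [Fintype.sum_prod_type]
    have : ∀ j : ι, ∀ u : Fin (n + 1) → ι,
        chainWt ν P (e (j, u)) = chainWt ν P u * P (u (Fin.last n)) j := by
      intro j u
      have he : e (j, u) = Fin.snoc u j := by
        rw [he']
        funext i
        simp [Fin.snocEquiv]
      rw [he, chainWt_snoc]
    calc ∑ j : ι, ∑ u : Fin (n + 1) → ι, chainWt ν P (e (j, u))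
        = ∑ j : ι, ∑ u : Fin (n + 1) → ι, chainWt ν P u * P (u (Fin.last n)) j := by
          apply Finset.sum_congr rfl; intro j _
          exact Finset.sum_congr rfl fun u _ => this j u
      _ = ∑ u : Fin (n + 1) → ι, ∑ j : ι, chainWt ν P u * P (u (Fin.last n)) j :=
          Finset.sum_comm
      _ = ∑ u : Fin (n + 1) → ι, chainWt ν P u := by
          apply Finset.sum_congr rfl; intro u _
          rw [← Finset.mul_sum, hP, mul_one]
      _ = 1 := ih

lemma prodW_norm_bounds {d N : ℕ} (hd : 0 < d) (A : Fin N → Matrix (Fin d) (Fin d) ℝ)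
    (ρ : ℝ) (hρ : 0 < ρ) (G : Matrix (Fin d) (Fin d) ℝ) (hG : IsUnit G)
    (horth : ∀ i, ((ρ⁻¹ • (G * A i * G⁻¹))ᵀ) * (ρ⁻¹ • (G * A i * G⁻¹)) = 1) :
    ∃ K : ℝ, 1 ≤ K ∧ ∀ (n : ℕ) (w : Fin (n + 1) → Fin N),
      ρ ^ (n + 1) / K ≤ ‖prodW A w‖ ∧ ‖prodW A w‖ ≤ K * ρ ^ (n + 1) := by
  haveI : NeZero d := ⟨hd.ne'⟩
  have hdet := (Matrix.isUnit_iff_isUnit_det G).mp hG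
  have h1 : G⁻¹ * G = 1 := Matrix.nonsing_inv_mul G hdet
  have h2 : G * G⁻¹ = 1 := Matrix.mul_nonsing_inv G hdet
  have h3 : ∀ Z : Matrix (Fin d) (Fin d) ℝ, G * (G⁻¹ * Z) = Z := fun Z => by
    rw [← mul_assoc, h2, one_mul]
  set Qm : Fin N → Matrix (Fin d) (Fin d) ℝ := fun i => ρ⁻¹ • (G * A i * G⁻¹) with hQm
  have hAQ : ∀ i, A i = ρ • (G⁻¹ * Qm i * G) := by
    intro i
    show A i = ρ • (G⁻¹ * (ρ⁻¹ • (G * A i * G⁻¹)) * G)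
    rw [mul_smul_comm, smul_mul_assoc, smul_smul, mul_inv_cancel₀ hρ.ne', one_smul]
    calc A i = (G⁻¹ * G) * A i * (G⁻¹ * G) := by rw [h1, one_mul, mul_one]
      _ = G⁻¹ * (G * A i * G⁻¹) * G := by simp only [mul_assoc]
  set K : ℝ := (d : ℝ) * (‖G⁻¹‖ * ‖G‖) with hK
  have hGG : (1 : ℝ) ≤ ‖G⁻¹‖ * ‖G‖ := by
    calc (1 : ℝ) = ‖(1 : Matrix (Fin d) (Fin d) ℝ)‖ := norm_one.symm
      _ = ‖G⁻¹ * G‖ := by rw [h1]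
      _ ≤ ‖G⁻¹‖ * ‖G‖ := norm_mul_le _ _
  have hd1 : (1 : ℝ) ≤ (d : ℝ) := by exact_mod_cast hd
  have hK1 : (1 : ℝ) ≤ K := by
    calc (1 : ℝ) = 1 * 1 := (one_mul 1).symm
      _ ≤ (d : ℝ) * (‖G⁻¹‖ * ‖G‖) := by
          apply mul_le_mul hd1 hGG zero_le_one (by positivity)
  have hK0 : 0 < K := lt_of_lt_of_le one_pos hK1
  refine ⟨K, hK1, fun n w => ?_⟩
  set R := prodW Qm w with hRdef
  have hR : Rᵀ * R = 1 := prodW_orth Qm horth w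
  have hR' : R * Rᵀ = 1 := mul_eq_one_comm.mp hR
  have hrep : prodW A w = ρ ^ (n + 1) • (G⁻¹ * R * G) :=
    prodW_repr A Qm ρ G G⁻¹ h1 h2 hAQ w
  have hρn : (0 : ℝ) < ρ ^ (n + 1) := pow_pos hρ _
  have hnorm : ‖prodW A w‖ = ρ ^ (n + 1) * ‖G⁻¹ * R * G‖ := by
    rw [hrep, norm_smul, Real.norm_eq_abs, abs_of_pos hρn]
  have hRbound : ‖R‖ ≤ (d : ℝ) := norm_le_card R (orth_entry_le R hR)
  have hRTbound : ‖Rᵀ‖ ≤ (d : ℝ) := by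
    apply norm_le_card
    intro i j
    exact orth_entry_le R hR j i
  have hupX : ‖G⁻¹ * R * G‖ ≤ K := by
    calc ‖G⁻¹ * R * G‖ ≤ ‖G⁻¹ * R‖ * ‖G‖ := norm_mul_le _ _
      _ ≤ (‖G⁻¹‖ * ‖R‖) * ‖G‖ := by
          apply mul_le_mul_of_nonneg_right (norm_mul_le _ _) (norm_nonneg _)
      _ ≤ (‖G⁻¹‖ * (d : ℝ)) * ‖G‖ := by
          apply mul_le_mul_of_nonneg_right _ (norm_nonneg _)
          exact mul_le_mul_of_nonneg_left hRbound (norm_nonneg _)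
      _ = K := by rw [hK]; ring
  have hupY : ‖G⁻¹ * Rᵀ * G‖ ≤ K := by
    calc ‖G⁻¹ * Rᵀ * G‖ ≤ ‖G⁻¹ * Rᵀ‖ * ‖G‖ := norm_mul_le _ _
      _ ≤ (‖G⁻¹‖ * ‖Rᵀ‖) * ‖G‖ := by
          apply mul_le_mul_of_nonneg_right (norm_mul_le _ _) (norm_nonneg _)
      _ ≤ (‖G⁻¹‖ * (d : ℝ)) * ‖G‖ := by
          apply mul_le_mul_of_nonneg_right _ (norm_nonneg _)
          exact mul_le_mul_of_nonneg_left hRTbound (norm_nonneg _)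
      _ = K := by rw [hK]; ring
  have hXY : (G⁻¹ * R * G) * (G⁻¹ * Rᵀ * G) = 1 := by
    calc (G⁻¹ * R * G) * (G⁻¹ * Rᵀ * G) = G⁻¹ * ((R * Rᵀ) * G) := by
          simp only [mul_assoc, h3]
      _ = 1 := by rw [hR', one_mul, h1]
  have hlowX : 1 / K ≤ ‖G⁻¹ * R * G‖ := by
    have hone : (1 : ℝ) ≤ ‖G⁻¹ * R * G‖ * ‖G⁻¹ * Rᵀ * G‖ := by
      calc (1 : ℝ) = ‖(1 : Matrix (Fin d) (Fin d) ℝ)‖ := norm_one.symm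
        _ = ‖(G⁻¹ * R * G) * (G⁻¹ * Rᵀ * G)‖ := by rw [hXY]
        _ ≤ _ := norm_mul_le _ _
    have h4 : (1 : ℝ) ≤ ‖G⁻¹ * R * G‖ * K := by
      calc (1 : ℝ) ≤ ‖G⁻¹ * R * G‖ * ‖G⁻¹ * Rᵀ * G‖ := hone
        _ ≤ ‖G⁻¹ * R * G‖ * K := mul_le_mul_of_nonneg_left hupY (norm_nonneg _)
    rw [div_le_iff₀ hK0]
    linarith
  constructor
  · rw [hnorm, div_eq_mul_inv, ← one_div]
    exact mul_le_mul_of_nonneg_left hlowX hρn.le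
  · rw [hnorm, mul_comm K]
    exact mul_le_mul_of_nonneg_left hupX hρn.le

lemma rhoP_eq_of_bounds {d N : ℕ} (A : Fin N → Matrix (Fin d) (Fin d) ℝ) (ρ K : ℝ)
    (hρ : 0 < ρ) (hK1 : 1 ≤ K)
    (hb : ∀ (n : ℕ) (w : Fin (n + 1) → Fin N),
      ρ ^ (n + 1) / K ≤ ‖prodW A w‖ ∧ ‖prodW A w‖ ≤ K * ρ ^ (n + 1))
    (ν : Fin N → ℝ) (P : Matrix (Fin N) (Fin N) ℝ)
    (hν0 : ∀ i, 0 ≤ ν i) (hν1 : ∑ i, ν i = 1) (hP : IsStochastic P) :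
    rhoP ν P A = ρ := by
  have hK0 : (0 : ℝ) < K := lt_of_lt_of_le one_pos hK1
  set S : ℕ → ℝ := fun n =>
    ∑ w : Fin (n + 1) → Fin N, chainWt ν P w * ‖prodW A w‖ ^ (((n : ℝ) + 1)⁻¹) with hSdef
  have hc0 : ∀ n : ℕ, (0 : ℝ) ≤ ((n : ℝ) + 1)⁻¹ := fun n => by positivity
  have hwt : ∀ (n : ℕ) (w : Fin (n + 1) → Fin N), 0 ≤ chainWt ν P w :=
    fun n w => chainWt_nonneg hν0 hP.1 w
  have hsum : ∀ n : ℕ, ∑ w : Fin (n + 1) → Fin N, chainWt ν P w = 1 :=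
    sum_chainWt ν P hν1 hP.2
  have hup : ∀ n : ℕ, S n ≤ K ^ (((n : ℝ) + 1)⁻¹) * ρ := by
    intro n
    have hterm : ∀ w : Fin (n + 1) → Fin N,
        ‖prodW A w‖ ^ (((n : ℝ) + 1)⁻¹) ≤ K ^ (((n : ℝ) + 1)⁻¹) * ρ := by
      intro w
      calc ‖prodW A w‖ ^ (((n : ℝ) + 1)⁻¹) ≤ (K * ρ ^ (n + 1)) ^ (((n : ℝ) + 1)⁻¹) :=
            Real.rpow_le_rpow (norm_nonneg _) (hb n w).2 (hc0 n)
        _ = K ^ (((n : ℝ) + 1)⁻¹) * ρ := by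
            rw [Real.mul_rpow hK0.le (pow_pos hρ _).le, rpow_pow_inv ρ hρ n]
    calc S n ≤ ∑ w : Fin (n + 1) → Fin N, chainWt ν P w * (K ^ (((n : ℝ) + 1)⁻¹) * ρ) := by
          apply Finset.sum_le_sum
          intro w _
          exact mul_le_mul_of_nonneg_left (hterm w) (hwt n w)
      _ = K ^ (((n : ℝ) + 1)⁻¹) * ρ := by rw [← Finset.sum_mul, hsum, one_mul]
  have hlow : ∀ n : ℕ, ρ / K ^ (((n : ℝ) + 1)⁻¹) ≤ S n := by
    intro n
    have hterm : ∀ w : Fin (n + 1) → Fin N,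
        ρ / K ^ (((n : ℝ) + 1)⁻¹) ≤ ‖prodW A w‖ ^ (((n : ℝ) + 1)⁻¹) := by
      intro w
      calc ρ / K ^ (((n : ℝ) + 1)⁻¹) = (ρ ^ (n + 1) / K) ^ (((n : ℝ) + 1)⁻¹) := by
            rw [Real.div_rpow (pow_pos hρ _).le hK0.le, rpow_pow_inv ρ hρ n]
        _ ≤ ‖prodW A w‖ ^ (((n : ℝ) + 1)⁻¹) :=
            Real.rpow_le_rpow (by positivity) (hb n w).1 (hc0 n)
    calc ρ / K ^ (((n : ℝ) + 1)⁻¹)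
        = ∑ w : Fin (n + 1) → Fin N, chainWt ν P w * (ρ / K ^ (((n : ℝ) + 1)⁻¹)) := by
          rw [← Finset.sum_mul, hsum, one_mul]
      _ ≤ S n := by
          apply Finset.sum_le_sum
          intro w _
          exact mul_le_mul_of_nonneg_left (hterm w) (hwt n w)
  have huptend : Filter.Tendsto (fun n : ℕ => K ^ (((n : ℝ) + 1)⁻¹) * ρ)
      Filter.atTop (nhds ρ) := by
    have := (tendsto_rpow_inv_one K hK0).mul_const ρ
    rwa [one_mul] at this
  have hlowtend : Filter.Tendsto (fun n : ℕ => ρ / K ^ (((n : ℝ) + 1)⁻¹))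
      Filter.atTop (nhds ρ) := by
    have := Filter.Tendsto.div (tendsto_const_nhds (x := ρ)) (tendsto_rpow_inv_one K hK0)
      one_ne_zero
    rwa [div_one] at this
  have hS : Filter.Tendsto S Filter.atTop (nhds ρ) :=
    tendsto_of_tendsto_of_tendsto_of_le_of_le hlowtend huptend hlow hup
  exact hS.limsup_eq

lemma simplex_norm_le {N : ℕ} {v : Fin N → ℝ} (h0 : ∀ i, 0 ≤ v i) (h1 : ∑ i, v i = 1) :
    ‖v‖ ≤ 1 := by
  rw [pi_norm_le_iff_of_nonneg zero_le_one]
  intro i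
  rw [Real.norm_eq_abs, abs_of_nonneg (h0 i)]
  calc v i ≤ ∑ j, v j := Finset.single_le_sum (fun j _ => h0 j) (Finset.mem_univ i)
    _ = 1 := h1

lemma exists_invProb {N : ℕ} (hN : 0 < N) (P : Matrix (Fin N) (Fin N) ℝ)
    (hP : IsStochastic P) : ∃ ν, IsInvProb ν P := by
  haveI : Nonempty (Fin N) := Fin.pos_iff_nonempty.mp hN
  set L : (Fin N → ℝ) →ₗ[ℝ] (Fin N → ℝ) :=
    { toFun := fun ν j => ∑ i, ν i * P i j
      map_add' := by
        intro u v
        funext j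
        simp [add_mul, Finset.sum_add_distrib]
      map_smul' := by
        intro c v
        funext j
        simp [Finset.mul_sum, mul_assoc] } with hL
  have hLapp : ∀ (v : Fin N → ℝ) (j : Fin N), L v j = ∑ i, v i * P i j := fun v j => rfl
  set S : Set (Fin N → ℝ) := {ν | (∀ i, 0 ≤ ν i) ∧ ∑ i, ν i = 1} with hSdef
  have hfS : ∀ ν ∈ S, L ν ∈ S := by
    intro ν hν
    constructor
    · intro j
      rw [hLapp]
      exact Finset.sum_nonneg fun i _ => mul_nonneg (hν.1 i) (hP.1 i j)
    · show ∑ j, L ν j = 1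
      simp only [hLapp]
      rw [Finset.sum_comm]
      calc ∑ i, ∑ j, ν i * P i j = ∑ i, ν i * ∑ j, P i j := by
            apply Finset.sum_congr rfl
            intro i _
            rw [Finset.mul_sum]
        _ = ∑ i, ν i := by
            apply Finset.sum_congr rfl
            intro i _
            rw [hP.2 i, mul_one]
        _ = 1 := hν.2
  set δ : Fin N → ℝ := fun _ => (N : ℝ)⁻¹ with hδ
  have hNpos : (0 : ℝ) < N := by exact_mod_cast hN
  have hδS : δ ∈ S := by
    constructor
    · intro i; positivity
    · show ∑ _i : Fin N, (N : ℝ)⁻¹ = 1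
      rw [Finset.sum_const, Finset.card_univ, Fintype.card_fin, nsmul_eq_mul,
        mul_inv_cancel₀ hNpos.ne']
  set x : ℕ → (Fin N → ℝ) := fun k => (fun v => L v)^[k] δ with hx
  have hxsucc : ∀ k, x (k + 1) = L (x k) := by
    intro k
    show (fun v => L v)^[k + 1] δ = _
    rw [Function.iterate_succ_apply']
  have hxS : ∀ k, x k ∈ S := by
    intro k
    induction k with
    | zero => exact hδS
    | succ k ih => rw [hxsucc k]; exact hfS _ ih
  set μ : ℕ → (Fin N → ℝ) := fun n => ((n : ℝ) + 1)⁻¹ • ∑ k ∈ Finset.range (n + 1), x k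
    with hμ
  have hμS : ∀ n, μ n ∈ S := by
    intro n
    constructor
    · intro i
      show 0 ≤ ((n : ℝ) + 1)⁻¹ * (∑ k ∈ Finset.range (n + 1), x k) i
      apply mul_nonneg (by positivity)
      rw [Finset.sum_apply]
      exact Finset.sum_nonneg fun k _ => (hxS k).1 i
    · show ∑ i, ((n : ℝ) + 1)⁻¹ * (∑ k ∈ Finset.range (n + 1), x k) i = 1
      rw [← Finset.mul_sum]
      have : ∑ i, (∑ k ∈ Finset.range (n + 1), x k) i = (n : ℝ) + 1 := by
        calc ∑ i, (∑ k ∈ Finset.range (n + 1), x k) i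
            = ∑ i, ∑ k ∈ Finset.range (n + 1), x k i := by
              apply Finset.sum_congr rfl
              intro i _
              rw [Finset.sum_apply]
          _ = ∑ k ∈ Finset.range (n + 1), ∑ i, x k i := Finset.sum_comm
          _ = ∑ _k ∈ Finset.range (n + 1), (1 : ℝ) :=
              Finset.sum_congr rfl fun k _ => (hxS k).2
          _ = (n : ℝ) + 1 := by simp
      rw [this, inv_mul_cancel₀ (by positivity)]
  have hScl : IsClosed S := by
    have h1 : IsClosed {ν : Fin N → ℝ | ∀ i, 0 ≤ ν i} := by
      have : {ν : Fin N → ℝ | ∀ i, 0 ≤ ν i} = ⋂ i, {ν : Fin N → ℝ | 0 ≤ ν i} := by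
        ext ν; simp
      rw [this]
      exact isClosed_iInter fun i => isClosed_le continuous_const (continuous_apply i)
    have h2 : IsClosed {ν : Fin N → ℝ | ∑ i, ν i = 1} :=
      isClosed_eq (by continuity) continuous_const
    have : S = {ν : Fin N → ℝ | ∀ i, 0 ≤ ν i} ∩ {ν : Fin N → ℝ | ∑ i, ν i = 1} := by
      ext ν; exact Iff.rfl
    rw [this]
    exact h1.inter h2
  have hScpt : IsCompact S := by
    apply Metric.isCompact_of_isClosed_isBounded hScl
    apply (Metric.isBounded_closedBall (x := (0 : Fin N → ℝ)) (r := 1)).subset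
    intro ν hν
    rw [Metric.mem_closedBall, dist_zero_right]
    exact simplex_norm_le hν.1 hν.2
  obtain ⟨ν, hνS, φ, hφ, hconv⟩ := hScpt.tendsto_subseq hμS
  have hLc : Continuous fun v : Fin N → ℝ => L v := L.continuous_of_finiteDimensional
  have key : ∀ n, L (μ n) - μ n = ((n : ℝ) + 1)⁻¹ • (x (n + 1) - x 0) := by
    intro n
    have hLμ : L (μ n) = ((n : ℝ) + 1)⁻¹ • ∑ k ∈ Finset.range (n + 1), x (k + 1) := by
      show L (((n : ℝ) + 1)⁻¹ • ∑ k ∈ Finset.range (n + 1), x k) = _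
      rw [_root_.map_smul, map_sum]
      congr 1
      exact Finset.sum_congr rfl fun k _ => (hxsucc k).symm
    rw [hLμ]
    show _ - ((n : ℝ) + 1)⁻¹ • ∑ k ∈ Finset.range (n + 1), x k = _
    rw [← smul_sub]
    congr 1
    rw [← Finset.sum_sub_distrib, Finset.sum_range_sub]
  have hdiff : Filter.Tendsto (fun n => L (μ n) - μ n) Filter.atTop (nhds 0) := by
    have hbnd : ∀ n : ℕ, ‖L (μ n) - μ n‖ ≤ ((n : ℝ) + 1)⁻¹ * 2 := by
      intro n
      rw [key n, norm_smul, Real.norm_eq_abs, abs_of_nonneg (by positivity)]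
      apply mul_le_mul_of_nonneg_left _ (by positivity)
      calc ‖x (n + 1) - x 0‖ ≤ ‖x (n + 1)‖ + ‖x 0‖ := norm_sub_le _ _
        _ ≤ 1 + 1 := add_le_add (simplex_norm_le (hxS _).1 (hxS _).2)
            (simplex_norm_le (hxS _).1 (hxS _).2)
        _ = 2 := by norm_num
    have hgt : Filter.Tendsto (fun n : ℕ => ((n : ℝ) + 1)⁻¹ * 2) Filter.atTop (nhds 0) := by
      have h0 : Filter.Tendsto (fun n : ℕ => ((n : ℝ) + 1)⁻¹) Filter.atTop (nhds 0) := by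
        apply Filter.Tendsto.comp tendsto_inv_atTop_zero
        exact Filter.tendsto_atTop_add_const_right _ 1 tendsto_natCast_atTop_atTop
      simpa using h0.mul_const 2
    exact squeeze_zero_norm hbnd hgt
  have hdiff' : Filter.Tendsto (fun m => L (μ (φ m)) - μ (φ m)) Filter.atTop (nhds 0) :=
    hdiff.comp hφ.tendsto_atTop
  have hLconv : Filter.Tendsto (fun m => L (μ (φ m))) Filter.atTop (nhds (L ν)) :=
    (hLc.tendsto ν).comp hconv
  have hdiff2 : Filter.Tendsto (fun m => L (μ (φ m)) - μ (φ m)) Filter.atTop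
      (nhds (L ν - ν)) := hLconv.sub hconv
  have hzero : L ν - ν = 0 := tendsto_nhds_unique hdiff2 hdiff'
  have hLν : L ν = ν := by
    have := sub_eq_zero.mp hzero
    exact this
  refine ⟨ν, hνS.1, hνS.2, fun j => ?_⟩
  have := congrFun hLν j
  rw [hLapp] at this
  exact this

end Aux

open Matrix in
/-- if the matrices `ρ_d(A)⁻¹ G A_i G⁻¹` are all orthogonal for some
invertible `G`, then `ρ_d(A) = ρ_p(P, A)`. -/
theorem jsr_eq_rhoPP_of_orthogonal {d N : ℕ}
    (P : Matrix (Fin N) (Fin N) ℝ) (hP : IsStochastic P) (hsc : StronglyConnected P)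
    (hdiag : ∀ i, 0 < P i i)
    (A : Fin N → Matrix (Fin d) (Fin d) ℝ) (hA : IrredTuple A)
    (hinv : ∀ i, IsUnit (A i))
    (G : Matrix (Fin d) (Fin d) ℝ) (hG : IsUnit G)
    (horth : ∀ i, ((jsr A)⁻¹ • (G * A i * G⁻¹))ᵀ * ((jsr A)⁻¹ • (G * A i * G⁻¹)) = 1) :
    jsr A = rhoPP P A := by
  classical
  rcases Nat.eq_zero_or_pos d with hd | hd
  · -- degenerate case d = 0 : all norms vanish
    subst hd
    have hnorm : ∀ (n : ℕ) (w : Fin (n + 1) → Fin N), ‖prodW A w‖ = 0 := by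
      intro n w
      rw [Matrix.linfty_opNorm_def]
      simp
    have hjsr : jsr A = 0 := by
      unfold jsr
      have hsup : ∀ n : ℕ,
          (⨆ w : Fin (n + 1) → Fin N, ‖prodW A w‖ ^ (((n : ℝ) + 1)⁻¹)) = 0 := by
        intro n
        have hterm : ∀ w : Fin (n + 1) → Fin N,
            ‖prodW A w‖ ^ (((n : ℝ) + 1)⁻¹) = (0 : ℝ) := fun w => by
          rw [hnorm n w, Real.zero_rpow (by positivity)]
        rcases isEmpty_or_nonempty (Fin (n + 1) → Fin N) with h | h
        · exact Real.iSup_of_isEmpty _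
        · simp only [hterm]
          exact ciSup_const
      simp only [hsup]
      exact ciInf_const
    have hset : ∀ r ∈ {r | ∃ ν, IsInvProb ν P ∧ r = rhoP ν P A}, r = 0 := by
      rintro r ⟨ν, hν, rfl⟩
      unfold rhoP
      have hz : (fun n : ℕ => ∑ w : Fin (n + 1) → Fin N,
          chainWt ν P w * ‖prodW A w‖ ^ (((n : ℝ) + 1)⁻¹)) = fun _ => (0 : ℝ) := by
        funext n
        apply Finset.sum_eq_zero
        intro w _
        rw [hnorm n w, Real.zero_rpow (by positivity), mul_zero]
      rw [hz]
      exact Filter.limsup_const 0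
    have hr : rhoPP P A = 0 := by
      unfold rhoPP
      apply le_antisymm
      · exact Real.sSup_le (fun r hr => le_of_eq (hset r hr)) le_rfl
      · exact Real.sSup_nonneg fun r hr => ge_of_eq (hset r hr)
    rw [hjsr, hr]
  rcases Nat.eq_zero_or_pos N with hN | hN
  · -- degenerate case N = 0 : no words, no probabilities
    subst hN
    have hjsr : jsr A = 0 := by
      unfold jsr
      have hsup : ∀ n : ℕ,
          (⨆ w : Fin (n + 1) → Fin 0, ‖prodW A w‖ ^ (((n : ℝ) + 1)⁻¹)) = 0 := by
        intro n
        haveI : IsEmpty (Fin (n + 1) → Fin 0) := by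
          constructor
          intro w
          exact (w 0).elim0
        exact Real.iSup_of_isEmpty _
      simp only [hsup]
      exact ciInf_const
    have hr : rhoPP P A = 0 := by
      unfold rhoPP
      have hempty : {r | ∃ ν, IsInvProb ν P ∧ r = rhoP ν P A} = ∅ := by
        rw [Set.eq_empty_iff_forall_notMem]
        rintro r ⟨ν, ⟨_, hsum, _⟩, _⟩
        simp at hsum
      rw [hempty]
      exact Real.sSup_empty
    rw [hjsr, hr]
  -- main case
  have hρnn : 0 ≤ jsr A := by
    apply le_ciInf
    intro n
    exact Real.iSup_nonneg fun w => Real.rpow_nonneg (norm_nonneg _) _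
  have hρpos : 0 < jsr A := by
    rcases hρnn.lt_or_eq with h | h
    · exact h
    · exfalso
      have h0 := horth ⟨0, hN⟩
      rw [← h] at h0
      simp only [_root_.inv_zero, zero_smul, Matrix.transpose_zero, Matrix.zero_mul] at h0
      have h00 := congrFun (congrFun h0 ⟨0, hd⟩) ⟨0, hd⟩
      simp [Matrix.one_apply] at h00
  obtain ⟨K, hK1, hb⟩ := prodW_norm_bounds hd A (jsr A) hρpos G hG horth
  obtain ⟨ν0, hν0⟩ := exists_invProb hN P hP
  have hall : ∀ ν : Fin N → ℝ, IsInvProb ν P → rhoP ν P A = jsr A := fun ν hν =>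
    rhoP_eq_of_bounds A (jsr A) K hρpos hK1 hb ν P hν.1 hν.2.1 hP
  have hset : {r | ∃ ν, IsInvProb ν P ∧ r = rhoP ν P A} = {jsr A} := by
    ext r
    simp only [Set.mem_setOf_eq, Set.mem_singleton_iff]
    constructor
    · rintro ⟨ν, hν, rfl⟩
      exact hall ν hν
    · rintro rfl
      exact ⟨ν0, hν0, (hall ν0 hν0).symm⟩
  unfold rhoPP
  rw [hset, csSup_singleton]

end JSRpaper
end
end
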